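/- Let X be multivariate normal on ℝ^m with mean 0 and covariance Σ = (σ^{ij}). Then E[XᵢXⱼXₖX_s] = σ^{ij}σ^{ks} + σ^{ik}σ^{js} + σ^{is}σ^{jk} (Isserlis/Wick formula for the fourth central moment). -/

import Mathlib

open MeasureTheory ProbabilityTheory Real
open scoped NNReal ENNReal

lemma integrable_pow4_exp {b : ℝ} (hb : 0 < b) :
    Integrable (fun x : ℝ => x ^ 4 * Real.exp (-b * x ^ 2)) := by
  have h := integrable_rpow_mul_exp_neg_mul_sq hb (s := 4) (by norm_num)
  have : (fun x : ℝ => x ^ (4 : ℝ) * Real.exp (-b * x ^ 2)) =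
      fun x : ℝ => x ^ 4 * Real.exp (-b * x ^ 2) := by
    funext x
    rw [show (4 : ℝ) = ((4 : ℕ) : ℝ) by norm_num, Real.rpow_natCast]
  rwa [this] at h

lemma integral_pow4_exp {b : ℝ} (hb : 0 < b) :
    ∫ x : ℝ, x ^ 4 * Real.exp (-b * x ^ 2)
      = 3 / 4 * Real.sqrt π * b ^ (-(5 : ℝ) / 2) := by
  have habs : (fun x : ℝ => x ^ 4 * Real.exp (-b * x ^ 2)) =
      fun x : ℝ => |x| ^ 4 * Real.exp (-b * |x| ^ 2) := by
    funext x
    have h2 : |x| ^ 2 = x ^ 2 := sq_abs x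
    have h4 : |x| ^ 4 = x ^ 4 := by
      rw [show (4 : ℕ) = 2 * 2 from rfl, pow_mul, pow_mul, h2]
    rw [h2, h4]
  rw [habs, integral_comp_abs (f := fun x : ℝ => x ^ 4 * Real.exp (-b * x ^ 2))]
  have hIoi : ∫ x in Set.Ioi (0 : ℝ), x ^ 4 * Real.exp (-b * x ^ 2)
      = ∫ x in Set.Ioi (0 : ℝ), x ^ (4 : ℝ) * Real.exp (-b * x ^ (2 : ℝ)) := by
    refine setIntegral_congr_fun measurableSet_Ioi (fun x hx => ?_)
    rw [show (4 : ℝ) = ((4 : ℕ) : ℝ) by norm_num, show (2 : ℝ) = ((2 : ℕ) : ℝ) by norm_num,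
      Real.rpow_natCast, Real.rpow_natCast]
  rw [hIoi, integral_rpow_mul_exp_neg_mul_rpow (by norm_num) (by norm_num) hb]
  have hG : Real.Gamma (((4 : ℝ) + 1) / 2) = 3 / 2 * (1 / 2 * Real.sqrt π) := by
    rw [show ((4 : ℝ) + 1) / 2 = 3 / 2 + 1 by norm_num,
      Real.Gamma_add_one (by norm_num), show (3 : ℝ) / 2 = 1 / 2 + 1 by norm_num,
      Real.Gamma_add_one (by norm_num), Real.Gamma_one_half_eq]
  rw [hG, show -((4 : ℝ) + 1) / 2 = -(5 : ℝ) / 2 by norm_num]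
  ring

lemma integral_pow4_gaussian (v : ℝ≥0) :
    ∫ x, x ^ 4 ∂(gaussianReal 0 v) = 3 * (v : ℝ) ^ 2 := by
  by_cases hv : v = 0
  · subst hv
    rw [gaussianReal_zero_var, integral_dirac]
    norm_num
  · have hv' : 0 < (v : ℝ) := by exact_mod_cast pos_iff_ne_zero.mpr hv
    have ht : (0 : ℝ) < 2 * v := by positivity
    have hb : (0 : ℝ) < (2 * (v : ℝ))⁻¹ := by positivity
    rw [gaussianReal_of_var_ne_zero 0 hv]
    have hdmeas : Measurable fun x => (gaussianPDFReal 0 v x).toNNReal :=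
      (measurable_gaussianPDFReal 0 v).real_toNNReal
    have hdens : gaussianPDF 0 v = fun x => ((gaussianPDFReal 0 v x).toNNReal : ℝ≥0∞) := rfl
    rw [hdens, integral_withDensity_eq_integral_smul hdmeas]
    have hpt : (fun x : ℝ => (gaussianPDFReal 0 v x).toNNReal • x ^ 4) =
        fun x : ℝ => (Real.sqrt (2 * π * v))⁻¹ *
          (x ^ 4 * Real.exp (-(2 * (v : ℝ))⁻¹ * x ^ 2)) := by
      funext x
      rw [NNReal.smul_def, Real.coe_toNNReal _ (gaussianPDFReal_nonneg 0 v x), gaussianPDFReal,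
        show -(x - 0) ^ 2 / (2 * (v : ℝ)) = -(2 * (v : ℝ))⁻¹ * x ^ 2 by field_simp; ring]
      simp only [smul_eq_mul]
      ring
    rw [hpt, integral_const_mul, integral_pow4_exp hb]
    have h1 : ((2 * (v : ℝ))⁻¹) ^ (-(5 : ℝ) / 2) = (2 * (v : ℝ)) ^ ((5 : ℝ) / 2) := by
      rw [Real.inv_rpow ht.le, show -(5 : ℝ) / 2 = -((5 : ℝ) / 2) by ring,
        Real.rpow_neg ht.le, inv_inv]
    have h2 : (2 * (v : ℝ)) ^ ((5 : ℝ) / 2) = (2 * (v : ℝ)) ^ 2 * Real.sqrt (2 * v) := by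
      rw [show (5 : ℝ) / 2 = 2 + 1 / 2 by norm_num, Real.rpow_add ht, Real.rpow_two,
        ← Real.sqrt_eq_rpow]
    have h3 : Real.sqrt (2 * π * v) = Real.sqrt π * Real.sqrt (2 * v) := by
      rw [show 2 * π * (v : ℝ) = π * (2 * v) by ring, Real.sqrt_mul pi_pos.le]
    rw [h1, h2, h3]
    have hπ : (0 : ℝ) < Real.sqrt π := Real.sqrt_pos.mpr pi_pos
    have hs : (0 : ℝ) < Real.sqrt (2 * v) := Real.sqrt_pos.mpr ht
    field_simp
    ring

lemma integrable_pow4_gaussian (v : ℝ≥0) :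
    Integrable (fun x : ℝ => x ^ 4) (gaussianReal 0 v) := by
  by_cases hv : v = 0
  · subst hv
    rw [gaussianReal_zero_var]
    refine ⟨(measurable_id.pow_const 4).aestronglyMeasurable, ?_⟩
    rw [HasFiniteIntegral, lintegral_dirac]
    simp
  · have hb : (0 : ℝ) < (2 * (v : ℝ))⁻¹ := by
      have hv' : 0 < (v : ℝ) := by exact_mod_cast pos_iff_ne_zero.mpr hv
      positivity
    rw [gaussianReal_of_var_ne_zero 0 hv]
    have hdmeas : Measurable fun x => (gaussianPDFReal 0 v x).toNNReal :=
      (measurable_gaussianPDFReal 0 v).real_toNNReal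
    have hdens : gaussianPDF 0 v = fun x => ((gaussianPDFReal 0 v x).toNNReal : ℝ≥0∞) := rfl
    rw [hdens, integrable_withDensity_iff_integrable_smul hdmeas]
    have hpt : (fun x : ℝ => (gaussianPDFReal 0 v x).toNNReal • x ^ 4) =
        fun x : ℝ => (Real.sqrt (2 * π * v))⁻¹ *
          (x ^ 4 * Real.exp (-(2 * (v : ℝ))⁻¹ * x ^ 2)) := by
      funext x
      rw [NNReal.smul_def, Real.coe_toNNReal _ (gaussianPDFReal_nonneg 0 v x), gaussianPDFReal,
        show -(x - 0) ^ 2 / (2 * (v : ℝ)) = -(2 * (v : ℝ))⁻¹ * x ^ 2 by field_simp; ring]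
      simp only [smul_eq_mul]
      ring
    rw [hpt]
    exact (integrable_pow4_exp hb).const_mul _


def sg (b : Bool) : ℝ := if b then 1 else -1

@[simp] lemma sg_true : sg true = 1 := rfl
@[simp] lemma sg_false : sg false = -1 := rfl

set_option maxHeartbeats 4000000 in
theorem stmt18 {m : ℕ} {Ω : Type*} [MeasureSpace Ω] (P : Measure Ω) [IsProbabilityMeasure P]
    (X : Ω → Fin m → ℝ) (hmeas : Measurable X)
    (Sig : Matrix (Fin m) (Fin m) ℝ) (hsymm : Sig.IsSymm) (hpsd : Sig.PosSemidef)
    (hgauss : ∀ a : Fin m → ℝ,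
      Measure.map (fun ω => ∑ i, a i * X ω i) P =
        gaussianReal 0 (Real.toNNReal (∑ i, ∑ j, a i * a j * Sig i j)))
    (i j k s : Fin m) :
    ∫ ω, X ω i * X ω j * X ω k * X ω s ∂P =
      Sig i j * Sig k s + Sig i k * Sig j s + Sig i s * Sig j k := by
  -- the linear functional attached to coefficients e1 e2 e3 e4
  set a : ℝ → ℝ → ℝ → ℝ → (Fin m → ℝ) := fun e1 e2 e3 e4 t =>
    e1 * (if t = i then 1 else 0) + e2 * (if t = j then 1 else 0) +
      e3 * (if t = k then 1 else 0) + e4 * (if t = s then 1 else 0) with ha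
  have hac : ∀ (e1 e2 e3 e4 : ℝ) (ω : Ω),
      ∑ t, a e1 e2 e3 e4 t * X ω t =
        e1 * X ω i + e2 * X ω j + e3 * X ω k + e4 * X ω s := by
    intro e1 e2 e3 e4 ω
    simp [ha, add_mul, Finset.sum_add_distrib, mul_assoc, ite_mul, mul_ite, mul_zero, zero_mul,
      one_mul, mul_one, Finset.sum_ite_eq', Finset.mem_univ]
  have hq : ∀ e1 e2 e3 e4 : ℝ,
      ∑ p, ∑ q, a e1 e2 e3 e4 p * a e1 e2 e3 e4 q * Sig p q = e1 * e1 * Sig i i + e1 * e2 * Sig i j + e1 * e3 * Sig i k + e1 * e4 * Sig i s + e2 * e1 * Sig j i + e2 * e2 * Sig j j + e2 * e3 * Sig j k + e2 * e4 * Sig j s + e3 * e1 * Sig k i + e3 * e2 * Sig k j + e3 * e3 * Sig k k + e3 * e4 * Sig k s + e4 * e1 * Sig s i + e4 * e2 * Sig s j + e4 * e3 * Sig s k + e4 * e4 * Sig s s := by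
    intro e1 e2 e3 e4
    simp [ha, add_mul, mul_add, Finset.sum_add_distrib, ite_mul, mul_ite, mul_zero, zero_mul,
      one_mul, mul_one, Finset.sum_ite_eq', Finset.mem_univ]
    ring
  have hqnn : ∀ e1 e2 e3 e4 : ℝ, 0 ≤ ∑ p, ∑ q, a e1 e2 e3 e4 p * a e1 e2 e3 e4 q * Sig p q := by
    intro e1 e2 e3 e4
    have h0 := hpsd.dotProduct_mulVec_nonneg (a e1 e2 e3 e4)
    have heq : dotProduct (star (a e1 e2 e3 e4)) (Sig.mulVec (a e1 e2 e3 e4)) =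
        ∑ p, ∑ q, a e1 e2 e3 e4 p * a e1 e2 e3 e4 q * Sig p q := by
      simp only [dotProduct, Matrix.mulVec, star_trivial]
      refine Finset.sum_congr rfl fun p _ => ?_
      rw [Finset.mul_sum]
      exact Finset.sum_congr rfl fun q _ => by ring
    rwa [heq] at h0
  have hYmeas : ∀ e1 e2 e3 e4 : ℝ,
      Measurable (fun ω => ∑ t, a e1 e2 e3 e4 t * X ω t) := by
    intro e1 e2 e3 e4
    exact Finset.measurable_sum _ fun t _ =>
      ((measurable_pi_apply t).comp hmeas).const_mul _
  have hint : ∀ e1 e2 e3 e4 : ℝ,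
      Integrable (fun ω => (e1 * X ω i + e2 * X ω j + e3 * X ω k + e4 * X ω s) ^ 4) P := by
    intro e1 e2 e3 e4
    have h1 := integrable_pow4_gaussian
      (Real.toNNReal (∑ p, ∑ q, a e1 e2 e3 e4 p * a e1 e2 e3 e4 q * Sig p q))
    rw [← hgauss (a e1 e2 e3 e4)] at h1
    have h2 := (integrable_map_measure (g := fun x : ℝ => x ^ 4)
      ((measurable_id.pow_const 4).aestronglyMeasurable)
      (hYmeas e1 e2 e3 e4).aemeasurable).mp h1
    have h3 : ((fun x : ℝ => x ^ 4) ∘ fun ω => ∑ t, a e1 e2 e3 e4 t * X ω t) =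
        fun ω => (e1 * X ω i + e2 * X ω j + e3 * X ω k + e4 * X ω s) ^ 4 := by
      funext ω; simp only [Function.comp_apply]; rw [hac]
    rwa [h3] at h2
  have hval : ∀ e1 e2 e3 e4 : ℝ,
      ∫ ω, (e1 * X ω i + e2 * X ω j + e3 * X ω k + e4 * X ω s) ^ 4 ∂P =
        3 * (e1 * e1 * Sig i i + e1 * e2 * Sig i j + e1 * e3 * Sig i k + e1 * e4 * Sig i s + e2 * e1 * Sig j i + e2 * e2 * Sig j j + e2 * e3 * Sig j k + e2 * e4 * Sig j s + e3 * e1 * Sig k i + e3 * e2 * Sig k j + e3 * e3 * Sig k k + e3 * e4 * Sig k s + e4 * e1 * Sig s i + e4 * e2 * Sig s j + e4 * e3 * Sig s k + e4 * e4 * Sig s s) ^ 2 := by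
    intro e1 e2 e3 e4
    have h3 : (fun ω => (e1 * X ω i + e2 * X ω j + e3 * X ω k + e4 * X ω s) ^ 4) =
        fun ω => ((∑ t, a e1 e2 e3 e4 t * X ω t)) ^ 4 := by
      funext ω; rw [hac]
    have h4 := integral_map (μ := P) (φ := fun ω => ∑ t, a e1 e2 e3 e4 t * X ω t)
      (hYmeas e1 e2 e3 e4).aemeasurable (f := fun x : ℝ => x ^ 4)
      ((measurable_id.pow_const 4).aestronglyMeasurable)
    rw [h3, ← h4, hgauss (a e1 e2 e3 e4),
      integral_pow4_gaussian, Real.coe_toNNReal _ (hqnn e1 e2 e3 e4), hq]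
  have hpoint : ∀ ω : Ω, X ω i * X ω j * X ω k * X ω s =
      ∑ ε : Bool × Bool × Bool × Bool,
        (sg ε.1 * sg ε.2.1 * sg ε.2.2.1 * sg ε.2.2.2 / 384) *
          (sg ε.1 * X ω i + sg ε.2.1 * X ω j + sg ε.2.2.1 * X ω k + sg ε.2.2.2 * X ω s) ^ 4 := by
    intro ω
    simp only [Fintype.sum_prod_type, Fintype.sum_bool, sg_true, sg_false]
    ring
  calc ∫ ω, X ω i * X ω j * X ω k * X ω s ∂P
      = ∫ ω, ∑ ε : Bool × Bool × Bool × Bool,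
          (sg ε.1 * sg ε.2.1 * sg ε.2.2.1 * sg ε.2.2.2 / 384) *
          (sg ε.1 * X ω i + sg ε.2.1 * X ω j + sg ε.2.2.1 * X ω k + sg ε.2.2.2 * X ω s) ^ 4 ∂P := by
        exact integral_congr_ae (Filter.Eventually.of_forall hpoint)
    _ = ∑ ε : Bool × Bool × Bool × Bool, ∫ ω,
          (sg ε.1 * sg ε.2.1 * sg ε.2.2.1 * sg ε.2.2.2 / 384) *
          (sg ε.1 * X ω i + sg ε.2.1 * X ω j + sg ε.2.2.1 * X ω k + sg ε.2.2.2 * X ω s) ^ 4 ∂P := by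
        exact integral_finset_sum _ fun ε _ => ((hint _ _ _ _).const_mul _)
    _ = Sig i j * Sig k s + Sig i k * Sig j s + Sig i s * Sig j k := by
        simp only [integral_const_mul, hval]
        simp only [Fintype.sum_prod_type, Fintype.sum_bool, sg_true, sg_false]
        rw [hsymm.apply i j, hsymm.apply i k, hsymm.apply i s, hsymm.apply j k, hsymm.apply j s,
          hsymm.apply k s]
        ring
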